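/- (BEC-bound for H_α^H.) Fix α > 0, α ≠ 1, and suppose that for every fixed y ∈ I_α^H the map x ↦ κ_α^H(x,y) is convex on I_α^H, and likewise in the second argument for every fixed first argument. Write K_i = K_α^H(X_i|Y_i) and δ = δ_α^H = 2^{1-α}. Then: if α > 1, H_α^H(X_1+X_2|Y_1Y_2) ≥ (1/(1-α))·log( (δ − K_1)(δ − K_2)/(1 − δ) + δ ); and if α < 1, H_α^H(X_1+X_2|Y_1Y_2) ≤ (1/(1-α))·log( (δ − K_1)(δ − K_2)/(1 − δ) + δ ). If instead κ_α^H is concave in each argument, the two inequalities hold with ≤ and ≥ exchanged. -/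

import Mathlib

open Real

noncomputable section

/-- Binary convolution `a∗b = a(1-b) + (1-a)b`. -/
def bconv (a b : ℝ) : ℝ := a * (1 - b) + (1 - a) * b

/-- Binary Rényi entropy `h_α(p) = (1/(1-α))·log(p^α + (1-p)^α)`. -/
def binH (α p : ℝ) : ℝ := (1 / (1 - α)) * Real.log (p ^ α + (1 - p) ^ α)

/-- Inverse of `h_α` as a map `[0, log 2] → [0, 1/2]`. -/
def binHInv (α : ℝ) : ℝ → ℝ := Function.invFunOn (binH α) (Set.Icc 0 (1/2))

/-- `k_α^A(p) = (p^α + (1-p)^α)^{1/α}`. -/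
def kA (α p : ℝ) : ℝ := (p ^ α + (1 - p) ^ α) ^ (1/α)

/-- Inverse of `k_α^A`, mapping `I_α^A` back to `[0,1/2]`. -/
def kAInv (α : ℝ) : ℝ → ℝ := Function.invFunOn (kA α) (Set.Icc 0 (1/2))

/-- `δ_α^A = 2^{(1-α)/α}`. -/
def deltaA (α : ℝ) : ℝ := (2 : ℝ) ^ ((1 - α)/α)

/-- The closed interval `I_α^A` with endpoints `1` and `δ_α^A`. -/
def IA (α : ℝ) : Set ℝ := Set.uIcc 1 (deltaA α)

/-- `κ_α^A(x,y) = k_α^A((k_α^A)⁻¹(x) ∗ (k_α^A)⁻¹(y))`. -/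
def kkA (α x y : ℝ) : ℝ := kA α (bconv (kAInv α x) (kAInv α y))

/-- `k_α^H(p) = p^α + (1-p)^α`. -/
def kH (α p : ℝ) : ℝ := p ^ α + (1 - p) ^ α

/-- Inverse of `k_α^H`, mapping `I_α^H` back to `[0,1/2]`. -/
def kHInv (α : ℝ) : ℝ → ℝ := Function.invFunOn (kH α) (Set.Icc 0 (1/2))

/-- `δ_α^H = 2^{1-α}`. -/
def deltaH (α : ℝ) : ℝ := (2 : ℝ) ^ (1 - α)

/-- The closed interval `I_α^H` with endpoints `1` and `δ_α^H`. -/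
def IH (α : ℝ) : Set ℝ := Set.uIcc 1 (deltaH α)

/-- `κ_α^H(x,y) = k_α^H((k_α^H)⁻¹(x) ∗ (k_α^H)⁻¹(y))`. -/
def kkH (α x y : ℝ) : ℝ := kH α (bconv (kHInv α x) (kHInv α y))

/-- `ĥ_α(x,y) = h_α(h_α⁻¹(x) ∗ h_α⁻¹(y))`. -/
def hhat (α x y : ℝ) : ℝ := binH α (bconv (binHInv α x) (binHInv α y))

/-- Marginal on `Y` of a joint pmf. -/
def margY {X Y : Type*} [Fintype X] (p : X → Y → ℝ) (y : Y) : ℝ := ∑ x, p x y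

/-- A joint pmf: nonnegative entries summing to one. -/
def IsPmf {X Y : Type*} [Fintype X] [Fintype Y] (p : X → Y → ℝ) : Prop :=
  (∀ x y, 0 ≤ p x y) ∧ ∑ x, ∑ y, p x y = 1

/-- Arimoto conditional Rényi entropy `H_α^A(X|Y)`. -/
def condA (α : ℝ) {X Y : Type*} [Fintype X] [Fintype Y] (p : X → Y → ℝ) : ℝ :=
  (α / (1 - α)) * Real.log (∑ y, margY p y * (∑ x, (p x y / margY p y) ^ α) ^ (1/α))

/-- Hayashi conditional Rényi entropy `H_α^H(X|Y)`. -/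
def condH (α : ℝ) {X Y : Type*} [Fintype X] [Fintype Y] (p : X → Y → ℝ) : ℝ :=
  (1 / (1 - α)) * Real.log (∑ y, ∑ x, margY p y * (p x y / margY p y) ^ α)

/-- Jizba–Arimitsu conditional Rényi entropy `H_α^J(X|Y)`. -/
def condJ (α : ℝ) {X Y : Type*} [Fintype X] [Fintype Y] (p : X → Y → ℝ) : ℝ :=
  (1 / (1 - α)) * (Real.log (∑ x, ∑ y, p x y ^ α) - Real.log (∑ y, margY p y ^ α))

/-- Cachin conditional Rényi entropy `H_α^C(X|Y)`. -/
def condC (α : ℝ) {X Y : Type*} [Fintype X] [Fintype Y] (p : X → Y → ℝ) : ℝ :=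
  (1 / (1 - α)) * ∑ y, margY p y * Real.log (∑ x, (p x y / margY p y) ^ α)

/-- `K_α^A(X|Y) = exp(((1-α)/α)·H_α^A(X|Y))`. -/
def KA (α : ℝ) {X Y : Type*} [Fintype X] [Fintype Y] (p : X → Y → ℝ) : ℝ :=
  Real.exp (((1 - α)/α) * condA α p)

/-- `K_α^H(X|Y) = exp((1-α)·H_α^H(X|Y))`. -/
def KH (α : ℝ) {X Y : Type*} [Fintype X] [Fintype Y] (p : X → Y → ℝ) : ℝ :=
  Real.exp ((1 - α) * condH α p)

/-- `K_α^J(X|Y) = exp((1-α)·H_α^J(X|Y))`. -/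
def KJ (α : ℝ) {X Y : Type*} [Fintype X] [Fintype Y] (p : X → Y → ℝ) : ℝ :=
  Real.exp ((1 - α) * condJ α p)

/-- Joint pmf of `(X₁+X₂, (Y₁,Y₂))` for independent pairs `(X₁,Y₁)`, `(X₂,Y₂)`. -/
def combine {Y1 Y2 : Type*} (p1 : Bool → Y1 → ℝ) (p2 : Bool → Y2 → ℝ) :
    Bool → Y1 × Y2 → ℝ :=
  fun z y => ∑ x : Bool, p1 x y.1 * p2 (Bool.xor x z) y.2

/-- `k_∞^A(p) = max{p, 1-p}`. -/
def kInf (p : ℝ) : ℝ := max p (1 - p)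

/-- Binary min-entropy `h_∞(p) = -log max{p, 1-p}`. -/
def binHInf (p : ℝ) : ℝ := - Real.log (max p (1 - p))

/-- Inverse of the restriction of `h_∞` to `[0,1/2]`. -/
def binHInfInv : ℝ → ℝ := Function.invFunOn binHInf (Set.Icc 0 (1/2))

/-- Conditional min-entropy `H_∞(X|Y)` for binary `X`. -/
def condInf {Y : Type*} [Fintype Y] (p : Bool → Y → ℝ) : ℝ :=
  - Real.log (∑ y, margY p y * max (p false y / margY p y) (p true y / margY p y))

/-- Unconditional Rényi entropy of a finitely supported distribution. -/
def renyiEnt (α : ℝ) {X : Type*} [Fintype X] (p : X → ℝ) : ℝ :=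
  (1 / (1 - α)) * Real.log (∑ x, p x ^ α)

/-- Distribution of the mod-2 sum of two independent binary random variables. -/
def sumDist (p1 p2 : Bool → ℝ) : Bool → ℝ := fun z => ∑ x : Bool, p1 x * p2 (Bool.xor x z)

section Helpers
variable {α : ℝ}

lemma kH_zero (hα : 0 < α) : kH α 0 = 1 := by
  simp [kH, Real.zero_rpow hα.ne', Real.one_rpow]

lemma kH_half : kH α (1/2) = deltaH α := by
  have h2 : ((1:ℝ)/2) = (2:ℝ)^(-1 : ℝ) := by
    rw [Real.rpow_neg_one]; norm_num
  rw [kH, deltaH]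
  norm_num
  have e1 : ((2:ℝ)^(-1:ℝ))^α = 2^(-α) := by
    rw [← Real.rpow_mul (by norm_num)]; norm_num
  have e2 : (2:ℝ)^(1-α) = 2 * 2^(-α) := by
    rw [show (1-α) = 1 + (-α) by ring, Real.rpow_add (by norm_num), Real.rpow_one]
  rw [h2, e1, e2]; ring

lemma kH_symm (p : ℝ) : kH α (1 - p) = kH α p := by
  simp [kH, sub_sub_cancel, add_comm]

lemma deltaH_pos : 0 < deltaH α := Real.rpow_pos_of_pos (by norm_num) _

lemma kH_pos (hα : 0 < α) {x : ℝ} (hx : x ∈ Set.Icc (0:ℝ) 1) : 0 < kH α x := by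
  rcases le_total x (1/2) with h | h
  · have : (0:ℝ) < (1 - x) ^ α := Real.rpow_pos_of_pos (by linarith [hx.1]) _
    have : (0:ℝ) ≤ x ^ α := Real.rpow_nonneg hx.1 _
    unfold kH; linarith
  · have : (0:ℝ) < x ^ α := Real.rpow_pos_of_pos (by linarith) _
    have : (0:ℝ) ≤ (1-x) ^ α := Real.rpow_nonneg (by linarith [hx.2]) _
    unfold kH; linarith

lemma kH_continuous (hα : 0 < α) : Continuous (kH α) := by
  have h1 : Continuous fun x : ℝ => x ^ α :=
    continuous_iff_continuousAt.2 fun x => Real.continuousAt_rpow_const x α (Or.inr hα.le)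
  exact (h1.add (h1.comp (continuous_const.sub continuous_id)))

lemma kH_deriv (hα : 0 < α) {x : ℝ} (hx : x ∈ Set.Ioo (0:ℝ) (1/2)) :
    HasDerivAt (kH α) (α * x ^ (α - 1) - α * (1 - x) ^ (α - 1)) x := by
  have h1 : HasDerivAt (fun p : ℝ => p ^ α) (α * x ^ (α - 1)) x := by
    simpa [mul_comm] using Real.hasDerivAt_rpow_const (x := x) (p := α) (Or.inl hx.1.ne')
  have h2 : HasDerivAt (fun p : ℝ => (1 - p) ^ α) (α * (1 - x) ^ (α - 1) * (-1)) x := by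
    have hin : HasDerivAt (fun p : ℝ => 1 - p) (-1) x := (hasDerivAt_id x).const_sub 1
    have hout : HasDerivAt (fun p : ℝ => p ^ α) (α * (1 - x) ^ (α - 1)) (1 - x) := by
      simpa [mul_comm] using Real.hasDerivAt_rpow_const (x := 1 - x) (p := α)
        (Or.inl (by have := hx.2; intro h; nlinarith [hx.1, hx.2]))
    exact hout.comp x hin
  rw [show α * x ^ (α - 1) - α * (1 - x) ^ (α - 1) = α * x ^ (α - 1) + α * (1 - x) ^ (α - 1) * (-1) by ring]
  exact h1.add h2

lemma kH_strictAntiOn (hα1 : 1 < α) : StrictAntiOn (kH α) (Set.Icc 0 (1/2)) := by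
  have hα : 0 < α := by linarith
  apply strictAntiOn_of_deriv_neg (convex_Icc _ _) (kH_continuous hα).continuousOn
  intro x hx
  rw [interior_Icc] at hx
  rw [(kH_deriv hα hx).deriv]
  have : x ^ (α - 1) < (1 - x) ^ (α - 1) :=
    Real.rpow_lt_rpow hx.1.le (by linarith [hx.2]) (by linarith)
  nlinarith

lemma kH_strictMonoOn (hα : 0 < α) (hα1 : α < 1) : StrictMonoOn (kH α) (Set.Icc 0 (1/2)) := by
  apply strictMonoOn_of_deriv_pos (convex_Icc _ _) (kH_continuous hα).continuousOn
  intro x hx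
  rw [interior_Icc] at hx
  rw [(kH_deriv hα hx).deriv]
  have : (1 - x) ^ (α - 1) < x ^ (α - 1) :=
    Real.rpow_lt_rpow_of_neg hx.1 (by linarith [hx.2]) (by linarith)
  nlinarith

lemma kH_injOn (hα : 0 < α) (hα1 : α ≠ 1) : Set.InjOn (kH α) (Set.Icc 0 (1/2)) := by
  rcases lt_or_gt_of_ne hα1 with h | h
  · exact (kH_strictMonoOn hα h).injOn
  · exact (kH_strictAntiOn h).injOn

end Helpers

section Helpers2
variable {α : ℝ}

lemma kH_mem_IH (hα : 0 < α) (hα1 : α ≠ 1) {p : ℝ} (hp : p ∈ Set.Icc (0:ℝ) (1/2)) :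
    kH α p ∈ IH α := by
  have h0 : (0:ℝ) ∈ Set.Icc (0:ℝ) (1/2) := by norm_num
  have hh : (1/2:ℝ) ∈ Set.Icc (0:ℝ) (1/2) := by norm_num
  rw [IH, Set.mem_uIcc]
  rcases lt_or_gt_of_ne hα1 with h | h
  · left
    constructor
    · have := (kH_strictMonoOn hα h).monotoneOn h0 hp hp.1
      rwa [kH_zero hα] at this
    · have := (kH_strictMonoOn hα h).monotoneOn hp hh hp.2
      rwa [kH_half] at this
  · right
    constructor
    · have := (kH_strictAntiOn h).antitoneOn hp hh hp.2
      rwa [kH_half] at this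
    · have := (kH_strictAntiOn h).antitoneOn h0 hp hp.1
      rwa [kH_zero hα] at this

lemma kH_surjOn (hα : 0 < α) : Set.SurjOn (kH α) (Set.Icc (0:ℝ) (1/2)) (IH α) := by
  have : Set.uIcc (kH α 0) (kH α (1/2)) ⊆ kH α '' Set.uIcc 0 (1/2) :=
    intermediate_value_uIcc (kH_continuous hα).continuousOn
  rw [kH_zero hα, kH_half, Set.uIcc_of_le (by norm_num : (0:ℝ) ≤ 1/2)] at this
  exact this

lemma kHInv_mem (hα : 0 < α) {x : ℝ} (hx : x ∈ IH α) : kHInv α x ∈ Set.Icc (0:ℝ) (1/2) := by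
  obtain ⟨p, hp, hpx⟩ := kH_surjOn hα hx
  exact Function.invFunOn_mem ⟨p, hp, hpx⟩

lemma kH_kHInv (hα : 0 < α) {x : ℝ} (hx : x ∈ IH α) : kH α (kHInv α x) = x := by
  obtain ⟨p, hp, hpx⟩ := kH_surjOn hα hx
  exact Function.invFunOn_eq ⟨p, hp, hpx⟩

lemma kHInv_kH (hα : 0 < α) (hα1 : α ≠ 1) {p : ℝ} (hp : p ∈ Set.Icc (0:ℝ) (1/2)) :
    kHInv α (kH α p) = p :=
  (kH_injOn hα hα1).leftInvOn_invFunOn hp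

lemma kkH_kH_kH (hα : 0 < α) (hα1 : α ≠ 1) {p q : ℝ}
    (hp : p ∈ Set.Icc (0:ℝ) (1/2)) (hq : q ∈ Set.Icc (0:ℝ) (1/2)) :
    kkH α (kH α p) (kH α q) = kH α (bconv p q) := by
  rw [kkH, kHInv_kH hα hα1 hp, kHInv_kH hα hα1 hq]

lemma one_mem_IH : (1:ℝ) ∈ IH α := Set.left_mem_uIcc

lemma deltaH_mem_IH : deltaH α ∈ IH α := Set.right_mem_uIcc

lemma kkH_one (hα : 0 < α) (hα1 : α ≠ 1) {y : ℝ} (hy : y ∈ IH α) : kkH α 1 y = y := by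
  have h1 : kHInv α (1:ℝ) = 0 := by
    rw [show (1:ℝ) = kH α 0 from (kH_zero hα).symm, kHInv_kH hα hα1 (by norm_num)]
  rw [kkH, h1, show bconv 0 (kHInv α y) = kHInv α y by unfold bconv; ring, kH_kHInv hα hy]

lemma kkH_deltaH (hα : 0 < α) (hα1 : α ≠ 1) (y : ℝ) : kkH α (deltaH α) y = deltaH α := by
  have h1 : kHInv α (deltaH α) = 1/2 := by
    rw [show deltaH α = kH α (1/2) from kH_half.symm, kHInv_kH hα hα1 (by norm_num)]
  rw [kkH, h1, show bconv (1/2) (kHInv α y) = 1/2 by unfold bconv; ring, kH_half]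

lemma deltaH_ne_one (hα : 0 < α) (hα1 : α ≠ 1) : deltaH α ≠ 1 := by
  rcases lt_or_gt_of_ne hα1 with h | h
  · have : (1:ℝ) < deltaH α := Real.one_lt_rpow_iff_of_pos (by norm_num) |>.2 (Or.inl ⟨by norm_num, by linarith⟩)
    linarith
  · have : deltaH α < 1 := Real.rpow_lt_one_of_one_lt_of_neg (by norm_num) (by linarith)
    linarith

end Helpers2

section Helpers3
variable {α : ℝ}

/-- The BEC chord function. -/
def gBEC (α x y : ℝ) : ℝ := (deltaH α - x) * (deltaH α - y) / (1 - deltaH α) + deltaH α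

lemma chord_eq (hδ : deltaH α ≠ 1) {a b x y : ℝ} (hab : a + b = 1)
    (hx : x = a * 1 + b * deltaH α) : gBEC α x y = a * y + b * deltaH α := by
  have h1 : (1:ℝ) - deltaH α ≠ 0 := by intro h; apply hδ; linarith
  have hb : b = 1 - a := by linarith
  rw [gBEC, hx, hb]
  field_simp
  ring

lemma chord_le_of_convex (hα : 0 < α) (hα1 : α ≠ 1) {y : ℝ} (hy : y ∈ IH α)
    (hc : ConvexOn ℝ (IH α) (fun x => kkH α x y)) {x : ℝ} (hx : x ∈ IH α) :
    kkH α x y ≤ gBEC α x y := by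
  rw [IH, ← segment_eq_uIcc] at hx
  obtain ⟨a, b, ha, hb, hab, hxe⟩ := hx
  simp only [smul_eq_mul] at hxe
  have h2 := hc.2 (one_mem_IH (α := α)) (deltaH_mem_IH (α := α)) ha hb hab
  simp only [smul_eq_mul] at h2
  rw [kkH_one hα hα1 hy, kkH_deltaH hα hα1 y] at h2
  rw [chord_eq (deltaH_ne_one hα hα1) hab hxe.symm, ← hxe]
  exact h2

lemma chord_ge_of_concave (hα : 0 < α) (hα1 : α ≠ 1) {y : ℝ} (hy : y ∈ IH α)
    (hc : ConcaveOn ℝ (IH α) (fun x => kkH α x y)) {x : ℝ} (hx : x ∈ IH α) :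
    gBEC α x y ≤ kkH α x y := by
  rw [IH, ← segment_eq_uIcc] at hx
  obtain ⟨a, b, ha, hb, hab, hxe⟩ := hx
  simp only [smul_eq_mul] at hxe
  have h2 := hc.2 (one_mem_IH (α := α)) (deltaH_mem_IH (α := α)) ha hb hab
  simp only [smul_eq_mul] at h2
  rw [kkH_one hα hα1 hy, kkH_deltaH hα hα1 y] at h2
  rw [chord_eq (deltaH_ne_one hα hα1) hab hxe.symm, ← hxe]
  exact h2

lemma kH_bconv_min (a b : ℝ) :
    kH α (bconv (min a (1-a)) (min b (1-b))) = kH α (bconv a b) := by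
  have c1 : ∀ u v : ℝ, bconv (1-u) v = 1 - bconv u v := by intro u v; unfold bconv; ring
  have c2 : ∀ u v : ℝ, bconv u (1-v) = 1 - bconv u v := by intro u v; unfold bconv; ring
  rcases le_total a (1-a) with h1 | h1 <;> rcases le_total b (1-b) with h2 | h2
  · rw [min_eq_left h1, min_eq_left h2]
  · rw [min_eq_left h1, min_eq_right h2, c2, kH_symm]
  · rw [min_eq_right h1, min_eq_left h2, c1, kH_symm]
  · rw [min_eq_right h1, min_eq_right h2, c1, c2]
    simp [kH_symm, sub_sub_cancel]

/-- conditional probability parameter, folded into `[0,1/2]`. -/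
def condP {Y : Type*} [Fintype Y] (p : Bool → Y → ℝ) (y : Y) : ℝ :=
  min (p true y / margY p y) (p false y / margY p y)

section Pmf
variable {Y : Type*} [Fintype Y] {p : Bool → Y → ℝ}

lemma margY_nonneg (hp : IsPmf p) (y : Y) : 0 ≤ margY p y :=
  Finset.sum_nonneg fun x _ => hp.1 x y

lemma margY_eq_add (y : Y) : margY p y = p true y + p false y := by
  simp [margY, Fintype.sum_bool]

lemma sum_margY (hp : IsPmf p) : ∑ y, margY p y = 1 := by
  rw [← hp.2, Finset.sum_comm]; rfl

lemma p_eq_zero (hp : IsPmf p) {y : Y} (h : margY p y = 0) (x : Bool) : p x y = 0 := by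
  have h2 := margY_eq_add (p := p) y
  have := hp.1 true y; have := hp.1 false y
  cases x <;> linarith

lemma condP_mem (hp : IsPmf p) (y : Y) : condP p y ∈ Set.Icc (0:ℝ) (1/2) := by
  rcases eq_or_lt_of_le (margY_nonneg hp y) with h | h
  · simp [condP, p_eq_zero hp h.symm]
  · have ha : 0 ≤ p true y / margY p y := div_nonneg (hp.1 _ _) h.le
    have hb : 0 ≤ p false y / margY p y := div_nonneg (hp.1 _ _) h.le
    have hsum : p true y / margY p y + p false y / margY p y = 1 := by
      rw [← add_div, ← margY_eq_add, div_self h.ne']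
    constructor
    · exact le_min ha hb
    · rcases le_total (p true y / margY p y) (p false y / margY p y) with hle | hle
      · rw [condP, min_eq_left hle]; linarith
      · rw [condP, min_eq_right hle]; linarith

lemma termY (hα : 0 < α) (hp : IsPmf p) (y : Y) :
    ∑ x : Bool, margY p y * (p x y / margY p y) ^ α = margY p y * kH α (condP p y) := by
  rcases eq_or_lt_of_le (margY_nonneg hp y) with h | h
  · simp [← h]
  · have ha : p true y / margY p y + p false y / margY p y = 1 := by
      rw [← add_div, ← margY_eq_add, div_self h.ne']
    rw [Fintype.sum_bool]
    rcases le_total (p true y / margY p y) (p false y / margY p y) with hle | hle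
    · rw [condP, min_eq_left hle, kH,
        show 1 - p true y / margY p y = p false y / margY p y by linarith]
      ring
    · rw [condP, min_eq_right hle, kH,
        show 1 - p false y / margY p y = p true y / margY p y by linarith]
      ring

lemma exists_margY_pos (hp : IsPmf p) : ∃ y, 0 < margY p y := by
  by_contra h
  push_neg at h
  have : ∀ y, margY p y = 0 := fun y => le_antisymm (h y) (margY_nonneg hp y)
  have := sum_margY hp
  simp [this, ‹∀ y, margY p y = 0›] at this

lemma S_pos (hα : 0 < α) (hp : IsPmf p) :
    0 < ∑ y, margY p y * kH α (condP p y) := by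
  apply Finset.sum_pos'
  · intro y _
    have hc := condP_mem hp y
    exact mul_nonneg (margY_nonneg hp y)
      (kH_pos hα ⟨hc.1, by linarith [hc.2]⟩).le
  · obtain ⟨y, hy⟩ := exists_margY_pos hp
    have hc := condP_mem hp y
    exact ⟨y, Finset.mem_univ y, mul_pos hy (kH_pos hα ⟨hc.1, by linarith [hc.2]⟩)⟩

lemma KH_eq (hα : 0 < α) (hα1 : α ≠ 1) (hp : IsPmf p) :
    KH α p = ∑ y, margY p y * kH α (condP p y) := by
  have hS := S_pos hα hp
  have e1 : ∀ y : Y, (∑ x : Bool, margY p y * (p x y / margY p y) ^ α)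
      = margY p y * kH α (condP p y) := termY hα hp
  rw [KH, condH, ← mul_assoc, mul_one_div, div_self (by intro h; apply hα1; linarith), one_mul]
  rw [Finset.sum_congr rfl fun y _ => e1 y]
  exact Real.exp_log hS
end Pmf
end Helpers3

section Helpers4
variable {α : ℝ} {Y1 Y2 : Type*} [Fintype Y1] [Fintype Y2]

lemma margY_combine (p1 : Bool → Y1 → ℝ) (p2 : Bool → Y2 → ℝ) (y1 : Y1) (y2 : Y2) :
    margY (combine p1 p2) (y1, y2) = margY p1 y1 * margY p2 y2 := by
  simp [margY, combine, Fintype.sum_bool]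
  ring

lemma bconv_mem {a b : ℝ} (ha : a ∈ Set.Icc (0:ℝ) (1/2)) (hb : b ∈ Set.Icc (0:ℝ) (1/2)) :
    bconv a b ∈ Set.Icc (0:ℝ) 1 := by
  obtain ⟨ha0, ha1⟩ := ha; obtain ⟨hb0, hb1⟩ := hb
  constructor
  · unfold bconv; nlinarith
  · unfold bconv; nlinarith

lemma termComb (hα : 0 < α) (p1 : Bool → Y1 → ℝ) (p2 : Bool → Y2 → ℝ)
    (hp1 : IsPmf p1) (hp2 : IsPmf p2) (y1 : Y1) (y2 : Y2) :
    ∑ x : Bool, margY (combine p1 p2) (y1, y2) *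
        (combine p1 p2 x (y1, y2) / margY (combine p1 p2) (y1, y2)) ^ α
      = margY p1 y1 * margY p2 y2 * kH α (bconv (condP p1 y1) (condP p2 y2)) := by
  have hm := margY_combine p1 p2 y1 y2
  rcases eq_or_lt_of_le (margY_nonneg hp1 y1) with h1 | h1
  · simp [hm, ← h1]
  rcases eq_or_lt_of_le (margY_nonneg hp2 y2) with h2 | h2
  · simp [hm, ← h2]
  set m1 := margY p1 y1 with hm1
  set m2 := margY p2 y2 with hm2
  set a := p1 true y1 / m1 with hadef
  set b := p2 true y2 / m2 with hbdef
  have hpt : p1 true y1 = m1 * a := by rw [hadef, mul_div_cancel₀ _ h1.ne']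
  have hpf : p1 false y1 = m1 * (1 - a) := by
    have := margY_eq_add (p := p1) y1
    rw [mul_sub, mul_one, ← hpt, ← hm1] at *
    linarith
  have hqt : p2 true y2 = m2 * b := by rw [hbdef, mul_div_cancel₀ _ h2.ne']
  have hqf : p2 false y2 = m2 * (1 - b) := by
    have := margY_eq_add (p := p2) y2
    rw [mul_sub, mul_one, ← hqt, ← hm2] at *
    linarith
  have ct : combine p1 p2 true (y1, y2) = m1 * m2 * bconv a b := by
    simp [combine, Fintype.sum_bool]
    rw [hpt, hpf, hqt, hqf]; unfold bconv; ring
  have cf : combine p1 p2 false (y1, y2) = m1 * m2 * (1 - bconv a b) := by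
    simp [combine, Fintype.sum_bool]
    rw [hpt, hpf, hqt, hqf]; unfold bconv; ring
  have hca : condP p1 y1 = min a (1 - a) := by
    rw [condP, ← hm1, ← hadef, hpf, mul_comm, mul_div_assoc, div_self h1.ne', mul_one]
  have hcb : condP p2 y2 = min b (1 - b) := by
    rw [condP, ← hm2, ← hbdef, hqf, mul_comm, mul_div_assoc, div_self h2.ne', mul_one]
  have hmm : m1 * m2 ≠ 0 := (mul_pos h1 h2).ne'
  rw [Fintype.sum_bool, hm, ct, cf,
    mul_div_cancel_left₀ _ hmm, mul_div_cancel_left₀ _ hmm,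
    hca, hcb, kH_bconv_min, kH]
  ring

lemma sum_expand (f : Y1 → ℝ) (g : Y2 → ℝ) (u : Y1 → ℝ) (v : Y2 → ℝ) (C D : ℝ) :
    ∑ y1, ∑ y2, (f y1 * g y2 * C + D * (u y1 * v y2)) =
      (∑ y1, f y1) * (∑ y2, g y2) * C + D * ((∑ y1, u y1) * (∑ y2, v y2)) := by
  simp_rw [Finset.sum_add_distrib]
  congr 1
  · rw [Finset.sum_mul_sum, Finset.sum_mul]
    exact Finset.sum_congr rfl fun y1 _ => by rw [Finset.sum_mul]
  · rw [Finset.sum_mul_sum, Finset.mul_sum]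
    exact Finset.sum_congr rfl fun y1 _ => by rw [Finset.mul_sum]

lemma KH_bounds {p : Bool → Y1 → ℝ} (hα : 0 < α) (hα1 : α ≠ 1) (hp : IsPmf p) :
    min 1 (deltaH α) ≤ KH α p ∧ KH α p ≤ max 1 (deltaH α) := by
  rw [KH_eq hα hα1 hp]
  have hb : ∀ y : Y1, min 1 (deltaH α) ≤ kH α (condP p y) ∧
      kH α (condP p y) ≤ max 1 (deltaH α) := by
    intro y
    have := kH_mem_IH hα hα1 (condP_mem hp y)
    rw [IH, Set.mem_uIcc] at this
    rcases this with ⟨h1, h2⟩ | ⟨h1, h2⟩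
    · exact ⟨le_trans (min_le_left _ _) h1, le_trans h2 (le_max_right _ _)⟩
    · exact ⟨le_trans (min_le_right _ _) h1, le_trans h2 (le_max_left _ _)⟩
  constructor
  · calc min 1 (deltaH α) = ∑ y, margY p y * min 1 (deltaH α) := by
          rw [← Finset.sum_mul, sum_margY hp, one_mul]
      _ ≤ ∑ y, margY p y * kH α (condP p y) :=
          Finset.sum_le_sum fun y _ =>
            mul_le_mul_of_nonneg_left (hb y).1 (margY_nonneg hp y)
  · calc ∑ y, margY p y * kH α (condP p y) ≤ ∑ y, margY p y * max 1 (deltaH α) :=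
          Finset.sum_le_sum fun y _ =>
            mul_le_mul_of_nonneg_left (hb y).2 (margY_nonneg hp y)
      _ = max 1 (deltaH α) := by rw [← Finset.sum_mul, sum_margY hp, one_mul]

lemma gBEC_pos (hα : 0 < α) (hα1 : α ≠ 1) {K1 K2 : ℝ}
    (h1 : min 1 (deltaH α) ≤ K1 ∧ K1 ≤ max 1 (deltaH α))
    (h2 : min 1 (deltaH α) ≤ K2 ∧ K2 ≤ max 1 (deltaH α)) :
    0 < gBEC α K1 K2 := by
  have hδ : 0 < deltaH α := deltaH_pos
  rcases lt_or_gt_of_ne (deltaH_ne_one hα hα1) with h | h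
  · -- δ < 1 : min = δ, max = 1
    rw [min_eq_right h.le, max_eq_left h.le] at h1 h2
    have hnum : 0 ≤ (deltaH α - K1) * (deltaH α - K2) := by
      nlinarith [h1.1, h2.1]
    have : 0 ≤ (deltaH α - K1) * (deltaH α - K2) / (1 - deltaH α) :=
      div_nonneg hnum (by linarith)
    rw [gBEC]; linarith
  · -- 1 < δ : min = 1, max = δ
    rw [min_eq_left h.le, max_eq_right h.le] at h1 h2
    have key : -(deltaH α - 1) ≤ (deltaH α - K1) * (deltaH α - K2) / (1 - deltaH α) := by
      rw [le_div_iff_of_neg (by linarith : (1:ℝ) - deltaH α < 0)]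
      nlinarith [h1.1, h1.2, h2.1, h2.2]
    rw [gBEC]; linarith

lemma S_comb_pos (hα : 0 < α) (p1 : Bool → Y1 → ℝ) (p2 : Bool → Y2 → ℝ)
    (hp1 : IsPmf p1) (hp2 : IsPmf p2) :
    0 < ∑ y1, ∑ y2, margY p1 y1 * margY p2 y2 *
        kH α (bconv (condP p1 y1) (condP p2 y2)) := by
  have hterm : ∀ (y1 : Y1) (y2 : Y2), 0 ≤ margY p1 y1 * margY p2 y2 *
      kH α (bconv (condP p1 y1) (condP p2 y2)) := fun y1 y2 =>
    mul_nonneg (mul_nonneg (margY_nonneg hp1 y1) (margY_nonneg hp2 y2))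
      (kH_pos hα (bconv_mem (condP_mem hp1 y1) (condP_mem hp2 y2))).le
  obtain ⟨y1, hy1⟩ := exists_margY_pos hp1
  obtain ⟨y2, hy2⟩ := exists_margY_pos hp2
  apply Finset.sum_pos'
  · exact fun i _ => Finset.sum_nonneg fun j _ => hterm i j
  · refine ⟨y1, Finset.mem_univ y1, Finset.sum_pos' (fun j _ => hterm y1 j)
      ⟨y2, Finset.mem_univ y2, ?_⟩⟩
    exact mul_pos (mul_pos hy1 hy2)
      (kH_pos hα (bconv_mem (condP_mem hp1 y1) (condP_mem hp2 y2)))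

end Helpers4

/-- BEC-bound for the Hayashi conditional Rényi entropy. -/
theorem stmt_7 (α : ℝ) (hα : 0 < α) (hα1 : α ≠ 1)
    {Y1 Y2 : Type*} [Fintype Y1] [Fintype Y2]
    (p1 : Bool → Y1 → ℝ) (p2 : Bool → Y2 → ℝ)
    (hp1 : IsPmf p1) (hp2 : IsPmf p2) :
    (((∀ y ∈ IH α, ConvexOn ℝ (IH α) (fun x => kkH α x y)) ∧
      (∀ x ∈ IH α, ConvexOn ℝ (IH α) (fun y => kkH α x y))) →
      (1 < α → (1 / (1 - α)) * Real.log
          ((deltaH α - KH α p1) * (deltaH α - KH α p2) / (1 - deltaH α) + deltaH α) ≤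
          condH α (combine p1 p2)) ∧
      (α < 1 → condH α (combine p1 p2) ≤ (1 / (1 - α)) * Real.log
          ((deltaH α - KH α p1) * (deltaH α - KH α p2) / (1 - deltaH α) + deltaH α))) ∧
    (((∀ y ∈ IH α, ConcaveOn ℝ (IH α) (fun x => kkH α x y)) ∧
      (∀ x ∈ IH α, ConcaveOn ℝ (IH α) (fun y => kkH α x y))) →
      (1 < α → condH α (combine p1 p2) ≤ (1 / (1 - α)) * Real.log
          ((deltaH α - KH α p1) * (deltaH α - KH α p2) / (1 - deltaH α) + deltaH α)) ∧
      (α < 1 → (1 / (1 - α)) * Real.log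
          ((deltaH α - KH α p1) * (deltaH α - KH α p2) / (1 - deltaH α) + deltaH α) ≤
          condH α (combine p1 p2))) := by
  have hT : (∑ y : Y1 × Y2, ∑ x, margY (combine p1 p2) y *
        (combine p1 p2 x y / margY (combine p1 p2) y) ^ α)
      = ∑ y1, ∑ y2, margY p1 y1 * margY p2 y2 *
        kH α (bconv (condP p1 y1) (condP p2 y2)) := by
    rw [Fintype.sum_prod_type]
    exact Finset.sum_congr rfl fun y1 _ => Finset.sum_congr rfl fun y2 _ =>
      termComb hα p1 p2 hp1 hp2 y1 y2
  set T := ∑ y1, ∑ y2, margY p1 y1 * margY p2 y2 *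
      kH α (bconv (condP p1 y1) (condP p2 y2)) with hTdef
  have hcond : condH α (combine p1 p2) = (1/(1-α)) * Real.log T := by rw [condH, hT]
  have hTpos : 0 < T := S_comb_pos hα p1 p2 hp1 hp2
  have hGpos : 0 < gBEC α (KH α p1) (KH α p2) :=
    gBEC_pos hα hα1 (KH_bounds hα hα1 hp1) (KH_bounds hα hα1 hp2)
  have hGeq : (deltaH α - KH α p1) * (deltaH α - KH α p2) / (1 - deltaH α) + deltaH α
      = gBEC α (KH α p1) (KH α p2) := rfl
  have hsum_g : ∑ y1, ∑ y2, margY p1 y1 * margY p2 y2 *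
      gBEC α (kH α (condP p1 y1)) (kH α (condP p2 y2)) = gBEC α (KH α p1) (KH α p2) := by
    have e1 : ∀ (y1 : Y1) (y2 : Y2), margY p1 y1 * margY p2 y2 *
        gBEC α (kH α (condP p1 y1)) (kH α (condP p2 y2))
        = (margY p1 y1 * (deltaH α - kH α (condP p1 y1))) *
            (margY p2 y2 * (deltaH α - kH α (condP p2 y2))) * (1 - deltaH α)⁻¹
          + deltaH α * (margY p1 y1 * margY p2 y2) := by
      intro y1 y2; rw [gBEC, div_eq_mul_inv]; ring
    simp_rw [e1]
    rw [sum_expand]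
    have eA : ∑ y1, margY p1 y1 * (deltaH α - kH α (condP p1 y1)) = deltaH α - KH α p1 := by
      simp_rw [mul_sub]
      rw [Finset.sum_sub_distrib, ← Finset.sum_mul, sum_margY hp1, one_mul,
        ← KH_eq hα hα1 hp1]
    have eB : ∑ y2, margY p2 y2 * (deltaH α - kH α (condP p2 y2)) = deltaH α - KH α p2 := by
      simp_rw [mul_sub]
      rw [Finset.sum_sub_distrib, ← Finset.sum_mul, sum_margY hp2, one_mul,
        ← KH_eq hα hα1 hp2]
    rw [eA, eB, sum_margY hp1, sum_margY hp2, gBEC, div_eq_mul_inv]; ring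
  have hterm_eq : ∀ (y1 : Y1) (y2 : Y2), kH α (bconv (condP p1 y1) (condP p2 y2))
      = kkH α (kH α (condP p1 y1)) (kH α (condP p2 y2)) := fun y1 y2 =>
    (kkH_kH_kH hα hα1 (condP_mem hp1 y1) (condP_mem hp2 y2)).symm
  have hw : ∀ (y1 : Y1) (y2 : Y2), 0 ≤ margY p1 y1 * margY p2 y2 := fun y1 y2 =>
    mul_nonneg (margY_nonneg hp1 y1) (margY_nonneg hp2 y2)
  constructor
  · rintro ⟨hcx, -⟩
    have hle : T ≤ gBEC α (KH α p1) (KH α p2) := by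
      rw [← hsum_g, hTdef]
      refine Finset.sum_le_sum fun y1 _ => Finset.sum_le_sum fun y2 _ => ?_
      rw [hterm_eq y1 y2]
      exact mul_le_mul_of_nonneg_left
        (chord_le_of_convex hα hα1 (kH_mem_IH hα hα1 (condP_mem hp2 y2))
          (hcx _ (kH_mem_IH hα hα1 (condP_mem hp2 y2)))
          (kH_mem_IH hα hα1 (condP_mem hp1 y1))) (hw y1 y2)
    have hlog : Real.log T ≤ Real.log (gBEC α (KH α p1) (KH α p2)) :=
      Real.log_le_log hTpos hle
    constructor
    · intro hgt
      rw [hcond, hGeq]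
      exact mul_le_mul_of_nonpos_left hlog (by
        rw [div_nonpos_iff]; left; constructor <;> [norm_num; linarith])
    · intro hlt
      rw [hcond, hGeq]
      exact mul_le_mul_of_nonneg_left hlog (le_of_lt (by rw [one_div]; exact inv_pos.2 (by linarith)))
  · rintro ⟨hcv, -⟩
    have hge : gBEC α (KH α p1) (KH α p2) ≤ T := by
      rw [← hsum_g, hTdef]
      refine Finset.sum_le_sum fun y1 _ => Finset.sum_le_sum fun y2 _ => ?_
      rw [hterm_eq y1 y2]
      exact mul_le_mul_of_nonneg_left
        (chord_ge_of_concave hα hα1 (kH_mem_IH hα hα1 (condP_mem hp2 y2))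
          (hcv _ (kH_mem_IH hα hα1 (condP_mem hp2 y2)))
          (kH_mem_IH hα hα1 (condP_mem hp1 y1))) (hw y1 y2)
    have hlog : Real.log (gBEC α (KH α p1) (KH α p2)) ≤ Real.log T :=
      Real.log_le_log hGpos hge
    constructor
    · intro hgt
      rw [hcond, hGeq]
      exact mul_le_mul_of_nonpos_left hlog (by
        rw [div_nonpos_iff]; left; constructor <;> [norm_num; linarith])
    · intro hlt
      rw [hcond, hGeq]
      exact mul_le_mul_of_nonneg_left hlog (le_of_lt (by rw [one_div]; exact inv_pos.2 (by linarith)))
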